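/- (Duality principle.) For all closed terms P, Q ∈ S_A, EqFSCL ⊢ P = Q if and only if EqFSCL ⊢ P^dl = Q^dl. -/
import Mathlib


/-- Closed sequential propositional statements over `A`:
`P ::= a | T | F | ¬P | P ∧❛ P | P ∨❛ P`. -/
inductive STerm (A : Type) : Type
  | atom : A → STerm A
  | tt : STerm A
  | ff : STerm A
  | neg : STerm A → STerm A
  | and : STerm A → STerm A → STerm A
  | or : STerm A → STerm A → STerm A

/-- Derivability from the axiom set EqFSCL: the least congruence (w.r.t. `¬`, `∧❛`, `∨❛`)
on closed terms containing all closed substitution instances of the axioms (F1)-(F10). -/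
inductive EqFSCL {A : Type} : STerm A → STerm A → Prop
  | refl (P) : EqFSCL P P
  | symm {P Q} : EqFSCL P Q → EqFSCL Q P
  | trans {P Q R} : EqFSCL P Q → EqFSCL Q R → EqFSCL P R
  | neg_congr {P Q} : EqFSCL P Q → EqFSCL (.neg P) (.neg Q)
  | and_congr {P P' Q Q'} : EqFSCL P Q → EqFSCL P' Q' → EqFSCL (.and P P') (.and Q Q')
  | or_congr {P P' Q Q'} : EqFSCL P Q → EqFSCL P' Q' → EqFSCL (.or P P') (.or Q Q')
  | F1 : EqFSCL .ff (.neg .tt)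
  | F2 (x y) : EqFSCL (.or x y) (.neg (.and (.neg x) (.neg y)))
  | F3 (x) : EqFSCL (.neg (.neg x)) x
  | F4 (x) : EqFSCL (.and .tt x) x
  | F5 (x) : EqFSCL (.or x .ff) x
  | F6 (x) : EqFSCL (.and .ff x) .ff
  | F7 (x y z) : EqFSCL (.and (.and x y) z) (.and x (.and y z))
  | F8 (x) : EqFSCL (.and (.neg x) .ff) (.and x .ff)
  | F9 (x y) : EqFSCL (.or (.and x .ff) y) (.and (.or x .tt) y)
  | F10 (x y z) : EqFSCL (.or (.and x y) (.and z .ff))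
      (.and (.or x (.and z .ff)) (.or y (.and z .ff)))

/-- The dual `P^dl` of a closed term `P`. -/
def STerm.dual {A : Type} : STerm A → STerm A
  | .atom a => .atom a
  | .tt => .ff
  | .ff => .tt
  | .neg P => .neg P.dual
  | .and P Q => .or P.dual Q.dual
  | .or P Q => .and P.dual Q.dual


/-- Substitute every atom by its negation. -/
def STerm.nsub {A : Type} : STerm A → STerm A
  | .atom a => .neg (.atom a)
  | .tt => .tt
  | .ff => .ff
  | .neg P => .neg P.nsub
  | .and P Q => .and P.nsub Q.nsub
  | .or P Q => .or P.nsub Q.nsub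

theorem EqFSCL.nsub {A : Type} {P Q : STerm A} (h : EqFSCL P Q) :
    EqFSCL P.nsub Q.nsub := by
  induction h with
  | refl P => exact .refl _
  | symm _ ih => exact .symm ih
  | trans _ _ ih1 ih2 => exact .trans ih1 ih2
  | neg_congr _ ih => exact .neg_congr ih
  | and_congr _ _ ih1 ih2 => exact .and_congr ih1 ih2
  | or_congr _ _ ih1 ih2 => exact .or_congr ih1 ih2
  | F1 => exact .F1
  | F2 x y => exact .F2 _ _
  | F3 x => exact .F3 _
  | F4 x => exact .F4 _
  | F5 x => exact .F5 _
  | F6 x => exact .F6 _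
  | F7 x y z => exact .F7 _ _ _
  | F8 x => exact .F8 _
  | F9 x y => exact .F9 _ _
  | F10 x y z => exact .F10 _ _ _

theorem dual_eq_neg_nsub {A : Type} (P : STerm A) :
    EqFSCL P.dual (.neg P.nsub) := by
  induction P with
  | atom a => exact .symm (.F3 _)
  | tt => exact .F1
  | ff => exact .trans (.symm (.F3 _)) (.neg_congr (.symm .F1))
  | neg P ih => exact .neg_congr ih
  | and P Q ihP ihQ =>
      exact .trans (.F2 _ _) (.neg_congr (.and_congr
        (.trans (.neg_congr ihP) (.F3 _)) (.trans (.neg_congr ihQ) (.F3 _))))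
  | or P Q ihP ihQ =>
      exact .trans (.and_congr ihP ihQ)
        (.symm (.trans (.neg_congr (.F2 _ _)) (.F3 _)))

theorem STerm.dual_dual {A : Type} (P : STerm A) : P.dual.dual = P := by
  induction P <;> simp [STerm.dual, *]

theorem eqFSCL_dual_fwd {A : Type} {P Q : STerm A} (h : EqFSCL P Q) :
    EqFSCL P.dual Q.dual :=
  .trans (dual_eq_neg_nsub P)
    (.trans (.neg_congr h.nsub) (.symm (dual_eq_neg_nsub Q)))

/-- Duality principle: `EqFSCL ⊢ P = Q` iff `EqFSCL ⊢ P^dl = Q^dl`. -/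
theorem eqFSCL_duality {A : Type} [Nonempty A] (P Q : STerm A) :
    EqFSCL P Q ↔ EqFSCL P.dual Q.dual := by
  constructor
  · exact eqFSCL_dual_fwd
  · intro h
    have := eqFSCL_dual_fwd h
    rwa [STerm.dual_dual, STerm.dual_dual] at this
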